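/- arXiv:2305.17037 — 3 statements merged into one kernel-verified Lean document; each statement's English description precedes it below -/
import Mathlib

section
/- For any two probability distributions P1 and P2 on R^d with zero means and finite second moments, with covariance matrices Σ1 and Σ2 respectively, the 2-Wasserstein distance between P1 and P2 is at least the Gelbrich distance between Σ1 and Σ2, i.e., W(P1,P2) ≥ sqrt(Tr(Σ1 + Σ2 - 2(Σ2^{1/2} Σ1 Σ2^{1/2})^{1/2})). -/
open Matrix

/-- The positive semidefinite square root of a matrix (zero if the matrix is
not positive semidefinite). -/
noncomputable def psdSqrt {d : ℕ} (A : Matrix (Fin d) (Fin d) ℝ) :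
    Matrix (Fin d) (Fin d) ℝ := by
  classical exact if h : A.PosSemidef then
    h.1.eigenvectorUnitary.1 * diagonal (Real.sqrt ∘ h.1.eigenvalues) *
      (star h.1.eigenvectorUnitary : Matrix (Fin d) (Fin d) ℝ) else 0

/-- The Gelbrich distance between covariance matrices. -/
noncomputable def gelbrich {d : ℕ} (S1 S2 : Matrix (Fin d) (Fin d) ℝ) : ℝ :=
  Real.sqrt (S1 + S2 - (2 : ℝ) • psdSqrt (psdSqrt S2 * S1 * psdSqrt S2)).trace

open MeasureTheory

/-- The 2-Wasserstein distance between two distributions on `ℝ^d`, defined as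
the square root of the infimum, over all couplings, of the expected squared
Euclidean distance. -/
noncomputable def wasserstein2 {d : ℕ} (P1 P2 : Measure (Fin d → ℝ)) : ℝ :=
  Real.sqrt (sInf ((fun π : Measure ((Fin d → ℝ) × (Fin d → ℝ)) =>
    ∫ p, ∑ i, (p.1 i - p.2 i) ^ 2 ∂π) ''
    {π | π.map Prod.fst = P1 ∧ π.map Prod.snd = P2}))


set_option linter.unusedSectionVars false
set_option maxHeartbeats 1000000

namespace Gel

variable {d : ℕ} {A : Matrix (Fin d) (Fin d) ℝ}

noncomputable def fcal (hA : A.IsHermitian) (f : ℝ → ℝ) : Matrix (Fin d) (Fin d) ℝ :=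
  hA.eigenvectorUnitary.1 * diagonal (f ∘ hA.eigenvalues) * (star hA.eigenvectorUnitary.1)

lemma fcal_mul (hA : A.IsHermitian) (f g : ℝ → ℝ) :
    fcal hA f * fcal hA g = fcal hA (fun t => f t * g t) := by
  have hU : (star hA.eigenvectorUnitary.1) * hA.eigenvectorUnitary.1 = 1 :=
    Matrix.mem_unitaryGroup_iff'.mp hA.eigenvectorUnitary.2
  unfold fcal
  simp only [mul_assoc]
  rw [← mul_assoc (star hA.eigenvectorUnitary.1) hA.eigenvectorUnitary.1, hU, one_mul,
    ← mul_assoc (diagonal (f ∘ hA.eigenvalues)), diagonal_mul_diagonal]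
  rfl

lemma fcal_congr (hA : A.IsHermitian) {f g : ℝ → ℝ}
    (h : ∀ i, f (hA.eigenvalues i) = g (hA.eigenvalues i)) : fcal hA f = fcal hA g := by
  unfold fcal
  congr 2
  ext i j
  rcases eq_or_ne i j with rfl | hij
  · simp [Function.comp, h i]
  · simp [diagonal_apply_ne _ hij]

lemma fcal_id (hA : A.IsHermitian) : fcal hA (fun t => t) = A := by
  unfold fcal
  simpa [Function.comp_def] using hA.spectral_theorem.symm

lemma fcal_herm (hA : A.IsHermitian) (f : ℝ → ℝ) : (fcal hA f).IsHermitian := by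
  unfold fcal
  unfold Matrix.IsHermitian
  rw [conjTranspose_mul, conjTranspose_mul, diagonal_conjTranspose]
  simp [star_star, mul_assoc, Function.comp, star_eq_conjTranspose,
    conjTranspose_eq_transpose_of_trivial]

lemma fcal_transpose (hA : A.IsHermitian) (f : ℝ → ℝ) : (fcal hA f)ᵀ = fcal hA f := by
  rw [← conjTranspose_eq_transpose_of_trivial]
  exact fcal_herm hA f

noncomputable def indf (t : ℝ) : ℝ := if t = 0 then 0 else 1
noncomputable def ginv (t : ℝ) : ℝ := if t = 0 then 0 else (Real.sqrt t)⁻¹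
noncomputable def q4 (t : ℝ) : ℝ := Real.sqrt (Real.sqrt t)
noncomputable def p4 (t : ℝ) : ℝ := if t = 0 then 0 else (q4 t)⁻¹
noncomputable def r4 (t : ℝ) : ℝ := if t = 0 then 0 else q4 t / t

lemma q4_pos {t : ℝ} (h : 0 < t) : 0 < q4 t :=
  Real.sqrt_pos.mpr (Real.sqrt_pos.mpr h)

lemma s_q4 (t : ℝ) : q4 t * q4 t = Real.sqrt t :=
  Real.mul_self_sqrt (Real.sqrt_nonneg t)

lemma s_p4 {t : ℝ} (h : 0 ≤ t) : p4 t * t * p4 t = Real.sqrt t := by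
  rcases eq_or_lt_of_le h with rfl | ht
  · simp [p4]
  · have hq := q4_pos ht
    rw [p4, if_neg ht.ne']
    rw [show (q4 t)⁻¹ * t * (q4 t)⁻¹ = t / (q4 t * q4 t) by field_simp, s_q4,
      Real.div_sqrt]

lemma s_ginv {t : ℝ} (h : 0 ≤ t) : ginv t * t * ginv t = indf t := by
  rcases eq_or_lt_of_le h with rfl | ht
  · simp [ginv, indf]
  · have hs : 0 < Real.sqrt t := Real.sqrt_pos.mpr ht
    rw [ginv, indf, if_neg ht.ne', if_neg ht.ne',
      show (Real.sqrt t)⁻¹ * t * (Real.sqrt t)⁻¹ = t / (Real.sqrt t * Real.sqrt t) by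
        field_simp, Real.mul_self_sqrt h, div_self ht.ne']

lemma s_p4q4 {t : ℝ} (h : 0 ≤ t) : p4 t * q4 t = indf t := by
  rcases eq_or_lt_of_le h with rfl | ht
  · simp [p4, indf]
  · rw [p4, indf, if_neg ht.ne', if_neg ht.ne', inv_mul_cancel₀ (q4_pos ht).ne']

lemma s_ginvs {t : ℝ} (h : 0 ≤ t) : ginv t * Real.sqrt t = indf t := by
  rcases eq_or_lt_of_le h with rfl | ht
  · simp [ginv, indf]
  · rw [ginv, indf, if_neg ht.ne', if_neg ht.ne',
      inv_mul_cancel₀ (Real.sqrt_pos.mpr ht).ne']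

lemma s_sginv {t : ℝ} (h : 0 ≤ t) : Real.sqrt t * ginv t = indf t := by
  rw [mul_comm]; exact s_ginvs h

lemma s_indsqrt (t : ℝ) : indf t * Real.sqrt t = Real.sqrt t := by
  rcases eq_or_ne t 0 with rfl | ht <;> simp [indf, *]

lemma s_idind (t : ℝ) : t * indf t = t := by
  rcases eq_or_ne t 0 with rfl | ht <;> simp [indf, *]

lemma s_indid (t : ℝ) : indf t * t = t := by rw [mul_comm]; exact s_idind t

lemma s_ginvind (t : ℝ) : ginv t * indf t = ginv t := by
  rcases eq_or_ne t 0 with rfl | ht <;> simp [indf, ginv, *]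

lemma s_idr4 (t : ℝ) : t * r4 t = q4 t := by
  rcases eq_or_ne t 0 with rfl | ht
  · simp [r4, q4]
  · rw [r4, if_neg ht]; field_simp

variable {d : ℕ} {A : Matrix (Fin d) (Fin d) ℝ}

lemma sqrt_eq_fcal (hA : A.PosSemidef) :
    hA.1.eigenvectorUnitary.1 * diagonal (Real.sqrt ∘ hA.1.eigenvalues) *
      (star hA.1.eigenvectorUnitary : Matrix (Fin d) (Fin d) ℝ) = fcal hA.1 Real.sqrt := by
  rfl

lemma fcal_mul_base (hA : A.IsHermitian) (f : ℝ → ℝ) :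
    fcal hA f * A = fcal hA (fun t => f t * t) := by
  have h := fcal_mul hA f (fun t => t)
  rw [fcal_id] at h
  exact h

lemma base_mul_fcal (hA : A.IsHermitian) (f : ℝ → ℝ) :
    A * fcal hA f = fcal hA (fun t => t * f t) := by
  have h := fcal_mul hA (fun t => t) f
  rw [fcal_id] at h
  exact h

lemma dot_mulVec_left (A : Matrix (Fin d) (Fin d) ℝ) (x z : Fin d → ℝ) :
    (A *ᵥ x) ⬝ᵥ z = x ⬝ᵥ (Aᵀ *ᵥ z) := by
  rw [dotProduct_comm, dotProduct_mulVec, dotProduct_comm, ← mulVec_transpose]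

theorem key {S1 S2 : Matrix (Fin d) (Fin d) ℝ}
    (h1 : S1.PosSemidef) (h2 : S2.PosSemidef) :
    ∃ C D Pr1 Pr2 : Matrix (Fin d) (Fin d) ℝ,
      ((1 - Pr1) * S1 * (1 - Pr1)ᵀ = 0) ∧
      ((1 - Pr2) * S2 * (1 - Pr2)ᵀ = 0) ∧
      (∀ x y : Fin d → ℝ, Pr1 *ᵥ x = x → Pr2 *ᵥ y = y →
        x ⬝ᵥ y = (C *ᵥ x) ⬝ᵥ (D *ᵥ y)) ∧
      C * S1 * Cᵀ = psdSqrt (psdSqrt S2 * S1 * psdSqrt S2) ∧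
      D * S2 * Dᵀ = psdSqrt (psdSqrt S2 * S1 * psdSqrt S2) := by
  classical
  set B : Matrix (Fin d) (Fin d) ℝ := fcal h2.1 Real.sqrt with hBdef
  have hBsqrt : psdSqrt S2 = B := by rw [psdSqrt, dif_pos h2, sqrt_eq_fcal h2]
  have hBherm : B.IsHermitian := fcal_herm _ _
  have hBt : Bᵀ = B := fcal_transpose _ _
  set M : Matrix (Fin d) (Fin d) ℝ := B * S1 * B with hMdef
  have hM : M.PosSemidef := by
    have := h1.mul_mul_conjTranspose_same B
    rwa [hBherm.eq] at this
  set N : Matrix (Fin d) (Fin d) ℝ := fcal hM.1 Real.sqrt with hNdef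
  have hNsqrt : psdSqrt (psdSqrt S2 * S1 * psdSqrt S2) = N := by
    rw [hBsqrt, ← hMdef, psdSqrt, dif_pos hM, sqrt_eq_fcal hM]
  set Nh : Matrix (Fin d) (Fin d) ℝ := fcal hM.1 q4 with hNh
  set P : Matrix (Fin d) (Fin d) ℝ := fcal hM.1 p4 with hP
  set PiN : Matrix (Fin d) (Fin d) ℝ := fcal hM.1 indf with hPiN
  set G : Matrix (Fin d) (Fin d) ℝ := fcal h2.1 ginv with hG
  set Pi2 : Matrix (Fin d) (Fin d) ℝ := fcal h2.1 indf with hPi2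
  set Asq : Matrix (Fin d) (Fin d) ℝ := fcal h1.1 Real.sqrt with hAsq
  set G1 : Matrix (Fin d) (Fin d) ℝ := fcal h1.1 ginv with hG1
  set Pi1 : Matrix (Fin d) (Fin d) ℝ := fcal h1.1 indf with hPi1
  -- basic identities
  have hPi1S1 : Pi1 * S1 = S1 := by
    rw [hPi1, fcal_mul_base]
    rw [fcal_congr h1.1 (g := fun t => t) (fun i => s_indid _), fcal_id]
  have hPi2S2 : Pi2 * S2 = S2 := by
    rw [hPi2, fcal_mul_base]
    rw [fcal_congr h2.1 (g := fun t => t) (fun i => s_indid _), fcal_id]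
  have hCt : (P * B)ᵀ = B * P := by
    rw [transpose_mul, hBdef, hP, fcal_transpose, fcal_transpose]
  have hDt : (Nh * G)ᵀ = G * Nh := by
    rw [transpose_mul, hNh, hG, fcal_transpose, fcal_transpose]
  refine ⟨P * B, Nh * G, Pi1, Pi2, ?_, ?_, ?_, ?_, ?_⟩
  · rw [sub_mul, one_mul, hPi1S1, sub_self, zero_mul]
  · rw [sub_mul, one_mul, hPi2S2, sub_self, zero_mul]
  · -- the dot product identity
    have hPNh : P * Nh = PiN := by
      rw [hP, hNh, hPiN, fcal_mul]
      exact fcal_congr hM.1 (fun i => s_p4q4 (hM.eigenvalues_nonneg i))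
    have hGPi2 : G * Pi2 = G := by
      rw [hG, hPi2, fcal_mul]
      exact fcal_congr h2.1 (fun i => s_ginvind _)
    have hBG : B * G = Pi2 := by
      rw [hBdef, hG, hPi2, fcal_mul]
      exact fcal_congr h2.1 (fun i => s_sginv (h2.eigenvalues_nonneg i))
    have hMPiN : M * PiN = M := by
      rw [hPiN, base_mul_fcal]
      rw [fcal_congr hM.1 (g := fun t => t) (fun i => s_idind _), fcal_id]
    have hAsqsq : Asq * Asq = S1 := by
      rw [hAsq, fcal_mul,
        fcal_congr h1.1 (g := fun t => t)
          (fun i => Real.mul_self_sqrt (h1.eigenvalues_nonneg i)), fcal_id]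
    have hPi1G1 : Pi1 = G1 * Asq := by
      rw [hPi1, hG1, hAsq, fcal_mul]
      exact (fcal_congr h1.1 (fun i => s_ginvs (h1.eigenvalues_nonneg i))).symm
    have hY : Asq * (B * (1 - PiN)) = 0 := by
      have hMR : M * (1 - PiN) = 0 := by rw [mul_sub, mul_one, hMPiN, sub_self]
      have hR : (1 - PiN)ᵀ = 1 - PiN := by
        rw [transpose_sub, transpose_one, hPiN, fcal_transpose]
      have hsq : (Asq * (B * (1 - PiN)))ᴴ * (Asq * (B * (1 - PiN))) = 0 := by
        rw [conjTranspose_eq_transpose_of_trivial, transpose_mul, transpose_mul, hR, hBt,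
          hAsq, fcal_transpose, ← hAsq]
        calc (1 - PiN) * B * Asq * (Asq * (B * (1 - PiN)))
            = (1 - PiN) * (B * (Asq * Asq) * B * (1 - PiN)) := by noncomm_ring
          _ = (1 - PiN) * (M * (1 - PiN)) := by rw [hAsqsq, ← hMdef]
          _ = 0 := by rw [hMR, mul_zero]
      exact conjTranspose_mul_self_eq_zero.mp hsq
    have hPi1BPiN : Pi1 * B * PiN = Pi1 * B := by
      have h0 : Pi1 * B * (1 - PiN) = 0 := by
        calc Pi1 * B * (1 - PiN) = G1 * (Asq * (B * (1 - PiN))) := by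
              rw [hPi1G1]; noncomm_ring
          _ = 0 := by rw [hY, mul_zero]
      rw [mul_sub, mul_one] at h0
      exact (sub_eq_zero.mp h0).symm
    have hKey : Pi1 * ((P * B)ᵀ * (Nh * G)) * Pi2 = Pi1 * Pi2 := by
      calc Pi1 * ((P * B)ᵀ * (Nh * G)) * Pi2
          = Pi1 * B * (P * Nh) * (G * Pi2) := by rw [hCt]; noncomm_ring
        _ = Pi1 * B * PiN * G := by rw [hPNh, hGPi2]
        _ = Pi1 * B * G := by rw [hPi1BPiN]
        _ = Pi1 * (B * G) := by rw [Matrix.mul_assoc]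
        _ = Pi1 * Pi2 := by rw [hBG]
    intro x y hx hy
    have hPi1t : Pi1ᵀ = Pi1 := by rw [hPi1, fcal_transpose]
    calc x ⬝ᵥ y = (Pi1 *ᵥ x) ⬝ᵥ (Pi2 *ᵥ y) := by rw [hx, hy]
      _ = x ⬝ᵥ (Pi1ᵀ *ᵥ (Pi2 *ᵥ y)) := dot_mulVec_left _ _ _
      _ = x ⬝ᵥ ((Pi1 * Pi2) *ᵥ y) := by rw [hPi1t, mulVec_mulVec]
      _ = x ⬝ᵥ ((Pi1 * ((P * B)ᵀ * (Nh * G)) * Pi2) *ᵥ y) := by rw [hKey]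
      _ = x ⬝ᵥ (Pi1ᵀ *ᵥ (((P * B)ᵀ * (Nh * G)) *ᵥ (Pi2 *ᵥ y))) := by
          rw [hPi1t, mulVec_mulVec, mulVec_mulVec, Matrix.mul_assoc]
      _ = (Pi1 *ᵥ x) ⬝ᵥ (((P * B)ᵀ * (Nh * G)) *ᵥ (Pi2 *ᵥ y)) :=
          (dot_mulVec_left _ _ _).symm
      _ = x ⬝ᵥ ((P * B)ᵀ *ᵥ ((Nh * G) *ᵥ y)) := by rw [hx, hy, mulVec_mulVec]
      _ = ((P * B) *ᵥ x) ⬝ᵥ ((Nh * G) *ᵥ y) :=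
          (dot_mulVec_left (P * B) x ((Nh * G) *ᵥ y)).symm
  · -- C * S1 * Cᵀ = N
    rw [hNsqrt]
    calc P * B * S1 * (P * B)ᵀ = P * (M * P) := by rw [hCt, hMdef]; noncomm_ring
      _ = P * fcal hM.1 (fun t => t * p4 t) := by rw [hP, base_mul_fcal]
      _ = fcal hM.1 (fun t => p4 t * (t * p4 t)) := by rw [hP, fcal_mul]
      _ = N := by
          rw [hNdef]
          refine fcal_congr hM.1 (fun i => ?_)
          rw [← mul_assoc]
          exact s_p4 (hM.eigenvalues_nonneg i)
  · -- D * S2 * Dᵀ = N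
    rw [hNsqrt]
    have hGSG : G * S2 * G = Pi2 := by
      rw [hG, fcal_mul_base, fcal_mul, hPi2]
      exact fcal_congr h2.1 (fun i => s_ginv (h2.eigenvalues_nonneg i))
    have hPi2Nh : Pi2 * Nh = Nh := by
      have hPi2B : Pi2 * B = B := by
        rw [hPi2, hBdef, fcal_mul]
        exact fcal_congr h2.1 (fun i => s_indsqrt _)
      have hPi2M : Pi2 * M = M := by
        calc Pi2 * M = (Pi2 * B) * S1 * B := by rw [hMdef]; noncomm_ring
          _ = M := by rw [hPi2B, hMdef]
      have hNhMR : M * fcal hM.1 r4 = Nh := by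
        rw [base_mul_fcal, hNh]
        exact fcal_congr hM.1 (fun i => s_idr4 _)
      calc Pi2 * Nh = Pi2 * M * fcal hM.1 r4 := by rw [Matrix.mul_assoc, hNhMR]
        _ = Nh := by rw [hPi2M, hNhMR]
    calc Nh * G * S2 * (Nh * G)ᵀ = Nh * (G * S2 * G) * Nh := by rw [hDt]; noncomm_ring
      _ = Nh * (Pi2 * Nh) := by rw [hGSG, Matrix.mul_assoc]
      _ = Nh * Nh := by rw [hPi2Nh]
      _ = N := by
          rw [hNh, hNdef, fcal_mul]
          exact fcal_congr hM.1 (fun i => s_q4 _)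

variable {d : ℕ}

lemma abs_mul_le_half (a b : ℝ) : |a * b| ≤ ((a)^2 + (b)^2)/2 := by
  rw [abs_mul]
  nlinarith [sq_nonneg (|a| - |b|), sq_abs a, sq_abs b, abs_nonneg a, abs_nonneg b]

section OneMeasure

variable {P : Measure (Fin d → ℝ)} [IsProbabilityMeasure P]
  {S : Matrix (Fin d) (Fin d) ℝ}

lemma int_mul (hint : Integrable (fun x => ∑ i, (x i)^2) P) (i j : Fin d) :
    Integrable (fun x : Fin d → ℝ => x i * x j) P := by
  refine hint.mono
    (((continuous_apply i).mul (continuous_apply j)).aestronglyMeasurable)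
    (Filter.Eventually.of_forall fun x => ?_)
  have hnn : (0:ℝ) ≤ ∑ k, (x k)^2 := Finset.sum_nonneg fun k _ => sq_nonneg _
  rw [Real.norm_eq_abs, Real.norm_eq_abs, abs_of_nonneg hnn]
  have hi : (x i)^2 ≤ ∑ k, (x k)^2 :=
    Finset.single_le_sum (fun k _ => sq_nonneg (x k)) (Finset.mem_univ i)
  have hj : (x j)^2 ≤ ∑ k, (x k)^2 :=
    Finset.single_le_sum (fun k _ => sq_nonneg (x k)) (Finset.mem_univ j)
  have := abs_mul_le_half (x i) (x j)
  linarith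

lemma cov_core_int (hint : Integrable (fun x => ∑ i, (x i)^2) P) (v w : Fin d → ℝ) :
    Integrable (fun x : Fin d → ℝ => ∑ j, ∑ k, v j * (w k * (x j * x k))) P := by
  refine integrable_finset_sum _ fun j _ => integrable_finset_sum _ fun k _ => ?_
  exact ((int_mul hint j k).const_mul (w k)).const_mul (v j)

lemma sum_mul_sum_eq (v w : Fin d → ℝ) (x : Fin d → ℝ) :
    (∑ j, v j * x j) * (∑ k, w k * x k) = ∑ j, ∑ k, v j * (w k * (x j * x k)) := by
  rw [Finset.sum_mul_sum]
  exact Finset.sum_congr rfl fun j _ => Finset.sum_congr rfl fun k _ => by ring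

lemma cov_core' (hint : Integrable (fun x => ∑ i, (x i)^2) P)
    (hS : ∀ i j, S i j = ∫ x, x i * x j ∂P) (v w : Fin d → ℝ) :
    ∫ x, ∑ j, ∑ k, v j * (w k * (x j * x k)) ∂P = ∑ j, ∑ k, v j * (w k * S j k) := by
  rw [integral_finset_sum _ (fun j _ => integrable_finset_sum _ fun k _ =>
    ((int_mul hint j k).const_mul (w k)).const_mul (v j))]
  refine Finset.sum_congr rfl fun j _ => ?_
  rw [integral_finset_sum _ (fun k _ => ((int_mul hint j k).const_mul (w k)).const_mul (v j))]
  refine Finset.sum_congr rfl fun k _ => ?_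
  rw [integral_const_mul, integral_const_mul, hS]

lemma cov_core (hint : Integrable (fun x => ∑ i, (x i)^2) P)
    (hS : ∀ i j, S i j = ∫ x, x i * x j ∂P) (v w : Fin d → ℝ) :
    ∫ x, (∑ j, v j * x j) * (∑ k, w k * x k) ∂P = ∑ j, ∑ k, v j * (w k * S j k) := by
  have h : (fun x : Fin d → ℝ => (∑ j, v j * x j) * (∑ k, w k * x k))
      = fun x => ∑ j, ∑ k, v j * (w k * (x j * x k)) := by
    funext x; exact sum_mul_sum_eq v w x
  rw [h]
  exact cov_core' hint hS v w

lemma cov_psd (hint : Integrable (fun x => ∑ i, (x i)^2) P)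
    (hS : ∀ i j, S i j = ∫ x, x i * x j ∂P) : S.PosSemidef := by
  refine posSemidef_iff_dotProduct_mulVec.mpr ⟨?_, ?_⟩
  · ext i j
    rw [conjTranspose_apply, star_trivial, hS, hS]
    have : (fun x : Fin d → ℝ => x j * x i) = fun x => x i * x j := by funext x; ring
    rw [this]
  · intro v
    have hdv : star v ⬝ᵥ S *ᵥ v = ∑ j, ∑ k, v j * (v k * S j k) := by
      simp only [star_trivial, dotProduct, mulVec, Finset.mul_sum]
      exact Finset.sum_congr rfl fun j _ => Finset.sum_congr rfl fun k _ => by ring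
    rw [hdv, ← cov_core hint hS v v]
    exact integral_nonneg fun x => mul_self_nonneg _

lemma cov_quad (hint : Integrable (fun x => ∑ i, (x i)^2) P)
    (hS : ∀ i j, S i j = ∫ x, x i * x j ∂P) (A : Matrix (Fin d) (Fin d) ℝ) :
    Integrable (fun x : Fin d → ℝ => ∑ i, ((A *ᵥ x) i)^2) P ∧
      ∫ x, ∑ i, ((A *ᵥ x) i)^2 ∂P = (A * S * Aᵀ).trace := by
  have hfun : (fun x : Fin d → ℝ => ∑ i, ((A *ᵥ x) i)^2)
      = fun x => ∑ i, ∑ j, ∑ k, A i j * (A i k * (x j * x k)) := by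
    funext x
    refine Finset.sum_congr rfl fun i _ => ?_
    rw [pow_two, show (A *ᵥ x) i = ∑ j, A i j * x j from rfl, sum_mul_sum_eq]
  constructor
  · rw [hfun]
    exact integrable_finset_sum _ fun i _ => cov_core_int hint (A i) (A i)
  · have h2 : ∫ x, ∑ i, ((A *ᵥ x) i)^2 ∂P = ∑ i, ∑ j, ∑ k, A i j * (A i k * S j k) := by
      rw [hfun, integral_finset_sum _ (fun i _ => cov_core_int hint (A i) (A i))]
      refine Finset.sum_congr rfl fun i _ => ?_
      exact cov_core' hint hS (A i) (A i)
    rw [h2]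
    unfold Matrix.trace
    refine Finset.sum_congr rfl fun i _ => ?_
    rw [Matrix.diag_apply, Matrix.mul_apply, Finset.sum_comm]
    refine Finset.sum_congr rfl fun j _ => ?_
    rw [Matrix.mul_apply, Finset.sum_mul]
    refine Finset.sum_congr rfl fun k _ => ?_
    rw [transpose_apply]
    ring

end OneMeasure
section OneMeasure2

variable {P : Measure (Fin d → ℝ)} [IsProbabilityMeasure P]
  {S : Matrix (Fin d) (Fin d) ℝ}

lemma cov_null (hint : Integrable (fun x => ∑ i, (x i)^2) P)
    (hS : ∀ i j, S i j = ∫ x, x i * x j ∂P) {A : Matrix (Fin d) (Fin d) ℝ}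
    (hA : A * S * Aᵀ = 0) : ∀ᵐ x ∂P, A *ᵥ x = 0 := by
  obtain ⟨hi, he⟩ := cov_quad hint hS A
  have h0 : ∫ x, ∑ i, ((A *ᵥ x) i)^2 ∂P = 0 := by rw [he, hA, trace_zero]
  have hnn : (fun _ => (0:ℝ)) ≤ᵐ[P] fun x => ∑ i, ((A *ᵥ x) i)^2 :=
    Filter.Eventually.of_forall fun x => by
      simpa using Finset.sum_nonneg (fun i _ => sq_nonneg ((A *ᵥ x) i))
  have hz := (integral_eq_zero_iff_of_nonneg_ae hnn hi).mp h0
  filter_upwards [hz] with x hx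
  funext i
  have : ∑ k, ((A *ᵥ x) k)^2 = 0 := hx
  have hterm := (Finset.sum_eq_zero_iff_of_nonneg
    (fun k _ => sq_nonneg ((A *ᵥ x) k))).mp this i (Finset.mem_univ i)
  exact pow_eq_zero_iff two_ne_zero |>.mp hterm

end OneMeasure2

section Coupling

variable {π : Measure ((Fin d → ℝ) × (Fin d → ℝ))} {P : Measure (Fin d → ℝ)}

lemma pull {g : (Fin d → ℝ) × (Fin d → ℝ) → (Fin d → ℝ)} (hg : Measurable g)
    (hmap : π.map g = P) {f : (Fin d → ℝ) → ℝ}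
    (hfm : AEStronglyMeasurable f P) (hfi : Integrable f P) :
    Integrable (fun p => f (g p)) π ∧ ∫ p, f (g p) ∂π = ∫ x, f x ∂P := by
  have hmf : AEStronglyMeasurable f (π.map g) := hmap ▸ hfm
  constructor
  · exact (integrable_map_measure hmf hg.aemeasurable).mp (hmap ▸ hfi)
  · rw [← hmap, integral_map hg.aemeasurable hmf]

lemma pull_ae {g : (Fin d → ℝ) × (Fin d → ℝ) → (Fin d → ℝ)} (hg : Measurable g)
    (hmap : π.map g = P) {s : Set (Fin d → ℝ)} (hs : MeasurableSet s)
    (h : ∀ᵐ x ∂P, x ∈ s) : ∀ᵐ p ∂π, g p ∈ s := by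
  rw [← hmap] at h
  exact (MeasureTheory.ae_map_iff hg.aemeasurable hs).mp h

end Coupling

end Gel
namespace Gel
open MeasureTheory
lemma dot_le {d : ℕ} (u w : Fin d → ℝ) :
    u ⬝ᵥ w ≤ ((∑ i, (u i)^2) + (∑ i, (w i)^2))/2 := by
  have h : ∑ i, (2:ℝ) * (u i * w i) ≤ ∑ i, ((u i)^2 + (w i)^2) :=
    Finset.sum_le_sum fun i _ => by nlinarith [sq_nonneg (u i - w i)]
  rw [← Finset.mul_sum, Finset.sum_add_distrib] at h
  have hd : u ⬝ᵥ w = ∑ i, u i * w i := rfl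
  linarith

lemma int_cross {d : ℕ} {π : Measure ((Fin d → ℝ) × (Fin d → ℝ))}
    (hI1 : Integrable (fun p : (Fin d → ℝ) × (Fin d → ℝ) => ∑ k, (p.1 k)^2) π)
    (hI2 : Integrable (fun p : (Fin d → ℝ) × (Fin d → ℝ) => ∑ k, (p.2 k)^2) π)
    (i j : Fin d) :
    Integrable (fun p : (Fin d → ℝ) × (Fin d → ℝ) => p.1 i * p.2 j) π := by
  refine (show Integrable (fun p : (Fin d → ℝ) × (Fin d → ℝ) =>
      (∑ k, (p.1 k)^2) + ∑ k, (p.2 k)^2) π from hI1.add hI2).mono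
    ((((continuous_apply i).comp continuous_fst).mul
      ((continuous_apply j).comp continuous_snd)).aestronglyMeasurable)
    (Filter.Eventually.of_forall fun p => ?_)
  have hnn1 : (0:ℝ) ≤ ∑ k, (p.1 k)^2 := Finset.sum_nonneg fun k _ => sq_nonneg _
  have hnn2 : (0:ℝ) ≤ ∑ k, (p.2 k)^2 := Finset.sum_nonneg fun k _ => sq_nonneg _
  rw [Real.norm_eq_abs, Real.norm_eq_abs,
    abs_of_nonneg (show (0:ℝ) ≤ (∑ k, (p.1 k)^2) + ∑ k, (p.2 k)^2 by linarith)]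
  have hi : (p.1 i)^2 ≤ ∑ k, (p.1 k)^2 :=
    Finset.single_le_sum (fun k _ => sq_nonneg (p.1 k)) (Finset.mem_univ i)
  have hj : (p.2 j)^2 ≤ ∑ k, (p.2 k)^2 :=
    Finset.single_le_sum (fun k _ => sq_nonneg (p.2 k)) (Finset.mem_univ j)
  have := abs_mul_le_half (p.1 i) (p.2 j)
  linarith

lemma cov_trace {d : ℕ} {P : Measure (Fin d → ℝ)} [IsProbabilityMeasure P]
    {S : Matrix (Fin d) (Fin d) ℝ}
    (hint : Integrable (fun x => ∑ i, (x i)^2) P)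
    (hS : ∀ i j, S i j = ∫ x, x i * x j ∂P) :
    ∫ x, ∑ i, (x i)^2 ∂P = S.trace := by
  have h := (cov_quad hint hS 1).2
  simp only [Matrix.one_mulVec, Matrix.transpose_one, Matrix.mul_one, Matrix.one_mul] at h
  exact h

lemma cont_quad {d : ℕ} (A : Matrix (Fin d) (Fin d) ℝ) :
    Continuous fun x : Fin d → ℝ => ∑ i, ((A *ᵥ x) i)^2 := by
  have hm : Continuous fun x : Fin d → ℝ => A *ᵥ x :=
    (Matrix.mulVecLin A).continuous_of_finiteDimensional
  exact continuous_finset_sum _ fun i _ => ((continuous_apply i).comp hm).pow 2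

end Gel

/-- Gelbrich bound: for any two zero-mean distributions on `ℝ^d` with finite
second moments and covariance matrices `S1`, `S2`, the 2-Wasserstein distance
is bounded below by the Gelbrich distance between the covariance matrices. -/
theorem gelbrich_le_wasserstein2 {d : ℕ} (P1 P2 : Measure (Fin d → ℝ))
    [IsProbabilityMeasure P1] [IsProbabilityMeasure P2]
    (hint1 : Integrable (fun x => ∑ i, (x i) ^ 2) P1)
    (hint2 : Integrable (fun x => ∑ i, (x i) ^ 2) P2)
    (hmean1 : ∀ i, ∫ x, x i ∂P1 = 0) (hmean2 : ∀ i, ∫ x, x i ∂P2 = 0)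
    (S1 S2 : Matrix (Fin d) (Fin d) ℝ)
    (hS1 : ∀ i j, S1 i j = ∫ x, x i * x j ∂P1)
    (hS2 : ∀ i j, S2 i j = ∫ x, x i * x j ∂P2) :
    gelbrich S1 S2 ≤ wasserstein2 P1 P2 := by
  classical
  have hS1p : S1.PosSemidef := Gel.cov_psd hint1 hS1
  have hS2p : S2.PosSemidef := Gel.cov_psd hint2 hS2
  obtain ⟨C, D, Pr1, Pr2, hQ1, hQ2, hdot, hC, hD⟩ := Gel.key hS1p hS2p
  have hae1 : ∀ᵐ x ∂P1, Pr1 *ᵥ x = x := by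
    filter_upwards [Gel.cov_null hint1 hS1 hQ1] with x hx
    rw [Matrix.sub_mulVec, Matrix.one_mulVec, sub_eq_zero] at hx
    exact hx.symm
  have hae2 : ∀ᵐ x ∂P2, Pr2 *ᵥ x = x := by
    filter_upwards [Gel.cov_null hint2 hS2 hQ2] with x hx
    rw [Matrix.sub_mulVec, Matrix.one_mulVec, sub_eq_zero] at hx
    exact hx.symm
  have hs1meas : MeasurableSet {x : Fin d → ℝ | Pr1 *ᵥ x = x} :=
    (isClosed_eq (Matrix.mulVecLin Pr1).continuous_of_finiteDimensional
      continuous_id).measurableSet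
  have hs2meas : MeasurableSet {x : Fin d → ℝ | Pr2 *ᵥ x = x} :=
    (isClosed_eq (Matrix.mulVecLin Pr2).continuous_of_finiteDimensional
      continuous_id).measurableSet
  have hcsum : Continuous fun x : Fin d → ℝ => ∑ i, (x i)^2 :=
    continuous_finset_sum _ fun i _ => (continuous_apply i).pow 2
  set N' : Matrix (Fin d) (Fin d) ℝ := psdSqrt (psdSqrt S2 * S1 * psdSqrt S2) with hN'
  have hmain : ∀ a ∈ ((fun π : Measure ((Fin d → ℝ) × (Fin d → ℝ)) =>
      ∫ p, ∑ i, (p.1 i - p.2 i) ^ 2 ∂π) ''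
      {π | π.map Prod.fst = P1 ∧ π.map Prod.snd = P2}),
      (S1 + S2 - (2 : ℝ) • N').trace ≤ a := by
    rintro a ⟨π, ⟨hfst, hsnd⟩, rfl⟩
    show (S1 + S2 - (2 : ℝ) • N').trace ≤ ∫ p, ∑ i, (p.1 i - p.2 i) ^ 2 ∂π
    obtain ⟨hI1, hE1⟩ := Gel.pull measurable_fst hfst hcsum.aestronglyMeasurable hint1
    obtain ⟨hI2, hE2⟩ := Gel.pull measurable_snd hsnd hcsum.aestronglyMeasurable hint2
    have hIc : Integrable (fun p : (Fin d → ℝ) × (Fin d → ℝ) => ∑ i, p.1 i * p.2 i) π :=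
      integrable_finset_sum _ fun i _ => Gel.int_cross hI1 hI2 i i
    -- quadratic forms
    have hquadC := Gel.cov_quad hint1 hS1 C
    have hquadD := Gel.cov_quad hint2 hS2 D
    obtain ⟨hICq, hECq⟩ := Gel.pull measurable_fst hfst
      (Gel.cont_quad C).aestronglyMeasurable hquadC.1
    obtain ⟨hIDq, hEDq⟩ := Gel.pull measurable_snd hsnd
      (Gel.cont_quad D).aestronglyMeasurable hquadD.1
    -- a.e. pointwise bound on the cross term
    have haeP : (fun p : (Fin d → ℝ) × (Fin d → ℝ) => ∑ i, p.1 i * p.2 i)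
        ≤ᵐ[π] fun p => ((∑ i, ((C *ᵥ p.1) i)^2) + (∑ i, ((D *ᵥ p.2) i)^2))/2 := by
      filter_upwards [Gel.pull_ae measurable_fst hfst hs1meas hae1,
        Gel.pull_ae measurable_snd hsnd hs2meas hae2] with p hp1 hp2
      have hd : p.1 ⬝ᵥ p.2 = (C *ᵥ p.1) ⬝ᵥ (D *ᵥ p.2) := hdot p.1 p.2 hp1 hp2
      have hle := Gel.dot_le (C *ᵥ p.1) (D *ᵥ p.2)
      have hsummul : (∑ i, p.1 i * p.2 i) = p.1 ⬝ᵥ p.2 := rfl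
      rw [hsummul, hd]
      exact hle
    have hcross_le : ∫ p, ∑ i, p.1 i * p.2 i ∂π ≤ N'.trace := by
      have hrhsint : Integrable (fun p : (Fin d → ℝ) × (Fin d → ℝ) =>
          ((∑ i, ((C *ᵥ p.1) i)^2) + (∑ i, ((D *ᵥ p.2) i)^2))/2) π :=
        (hICq.add hIDq).div_const 2
      calc ∫ p, ∑ i, p.1 i * p.2 i ∂π
          ≤ ∫ p, ((∑ i, ((C *ᵥ p.1) i)^2) + (∑ i, ((D *ᵥ p.2) i)^2))/2 ∂π :=
            integral_mono_ae hIc hrhsint haeP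
        _ = ((∫ p, ∑ i, ((C *ᵥ p.1) i)^2 ∂π) + ∫ p, ∑ i, ((D *ᵥ p.2) i)^2 ∂π)/2 := by
            rw [integral_div, integral_add hICq hIDq]
        _ = ((C * S1 * Cᵀ).trace + (D * S2 * Dᵀ).trace)/2 := by
            rw [hECq, hEDq, hquadC.2, hquadD.2]
        _ = N'.trace := by rw [hC, hD]; ring
    -- decompose the cost
    have hdecomp : (fun p : (Fin d → ℝ) × (Fin d → ℝ) => ∑ i, (p.1 i - p.2 i)^2)
        = fun p => ((∑ i, (p.1 i)^2) + (∑ i, (p.2 i)^2)) - 2 * (∑ i, p.1 i * p.2 i) := by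
      funext p
      rw [Finset.mul_sum, ← Finset.sum_add_distrib, ← Finset.sum_sub_distrib]
      exact Finset.sum_congr rfl fun i _ => by ring
    have hEcost : ∫ p, ∑ i, (p.1 i - p.2 i)^2 ∂π
        = ((∫ p, ∑ i, (p.1 i)^2 ∂π) + ∫ p, ∑ i, (p.2 i)^2 ∂π)
          - 2 * ∫ p, ∑ i, p.1 i * p.2 i ∂π := by
      have hIsum : Integrable (fun p : (Fin d → ℝ) × (Fin d → ℝ) =>
          (∑ i, (p.1 i)^2) + ∑ i, (p.2 i)^2) π := hI1.add hI2
      rw [hdecomp, integral_sub hIsum (hIc.const_mul 2), integral_add hI1 hI2,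
        integral_const_mul]
    have hT1 : ∫ p : (Fin d → ℝ) × (Fin d → ℝ), ∑ i, (p.1 i)^2 ∂π = S1.trace := by
      rw [hE1, Gel.cov_trace hint1 hS1]
    have hT2 : ∫ p : (Fin d → ℝ) × (Fin d → ℝ), ∑ i, (p.2 i)^2 ∂π = S2.trace := by
      rw [hE2, Gel.cov_trace hint2 hS2]
    have htr : (S1 + S2 - (2 : ℝ) • N').trace = S1.trace + S2.trace - 2 * N'.trace := by
      rw [Matrix.trace_sub, Matrix.trace_add, Matrix.trace_smul, smul_eq_mul]
    rw [hEcost, hT1, hT2, htr]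
    linarith
  have hne : ((fun π : Measure ((Fin d → ℝ) × (Fin d → ℝ)) =>
      ∫ p, ∑ i, (p.1 i - p.2 i) ^ 2 ∂π) ''
      {π | π.map Prod.fst = P1 ∧ π.map Prod.snd = P2}).Nonempty := by
    refine ⟨_, ⟨P1.prod P2, ⟨?_, ?_⟩, rfl⟩⟩
    · rw [MeasureTheory.Measure.map_fst_prod]
      simp [measure_univ]
    · rw [MeasureTheory.Measure.map_snd_prod]
      simp [measure_univ]
  exact Real.sqrt_le_sqrt (le_csInf hne hmain)
end

section
/- Let H, C be matrices such that CH is strictly block lower triangular. If a control satisfies u = Uη + q with U block lower triangular, where η = y - CHu, then u = U'y + q' with U' = (I + UCH)^{-1} U and q' = (I + UCH)^{-1} q. Conversely, if u = U'y + q' with U' block lower triangular, then u = Uη + q with U = (I - U'CH)^{-1} U' and q = (I - U'CH)^{-1} q'. -/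
open Matrix

/-- A matrix with rows indexed by `Fin T × Fin m` and columns by `Fin T × Fin p`
is block lower triangular if all blocks strictly above the diagonal vanish. -/
def IsBlockLowerTri {T m p : ℕ}
    (U : Matrix (Fin T × Fin m) (Fin T × Fin p) ℝ) : Prop :=
  ∀ i j, i.1 < j.1 → U i j = 0

/-- A matrix is strictly block lower triangular if all blocks on or above the
diagonal vanish. -/
def IsStrictBlockLowerTri {T p m : ℕ}
    (A : Matrix (Fin T × Fin p) (Fin T × Fin m) ℝ) : Prop :=
  ∀ i j, i.1 ≤ j.1 → A i j = 0

lemma det_one_add_strict {T m : ℕ}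
    (N : Matrix (Fin T × Fin m) (Fin T × Fin m) ℝ)
    (hN : ∀ i j, i.1 ≤ j.1 → N i j = 0) :
    (1 + N).det = 1 := by
  have hbt : Matrix.BlockTriangular (1 + N) (fun x => OrderDual.toDual x.1) := by
    intro i j hij
    have h : i.1 < j.1 := hij
    simp only [Matrix.add_apply, Matrix.one_apply, hN i j h.le, add_zero]
    rw [if_neg]
    · intro h'
      exact absurd (congrArg Prod.fst h') h.ne
  rw [hbt.det]
  apply Finset.prod_eq_one
  intro a _
  have : (1 + N).toSquareBlock (fun x => OrderDual.toDual x.1) a = 1 := by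
    ext x y
    have hx : x.1.1 = y.1.1 :=
      congrArg OrderDual.ofDual (x.2.trans y.2.symm)
    simp [Matrix.toSquareBlock_def, Matrix.one_apply, hN x.1 y.1 hx.le, Subtype.ext_iff]
  rw [this, det_one]

lemma strict_prod {T m p n : ℕ}
    (U : Matrix (Fin T × Fin m) (Fin T × Fin p) ℝ)
    (C : Matrix (Fin T × Fin p) (Fin n) ℝ)
    (H : Matrix (Fin n) (Fin T × Fin m) ℝ)
    (hU : IsBlockLowerTri U) (hCH : IsStrictBlockLowerTri (C * H)) :
    ∀ i j : Fin T × Fin m, i.1 ≤ j.1 → (U * C * H) i j = 0 := by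
  intro i j hij
  rw [Matrix.mul_assoc]
  rw [Matrix.mul_apply]
  apply Finset.sum_eq_zero
  intro k _
  by_cases hk : i.1 < k.1
  · rw [hU i k hk, zero_mul]
  · push_neg at hk
    rw [hCH k j (le_trans hk hij), mul_zero]

/-- One-to-one correspondence between causal linear purified output-feedback
controllers `u = Uη + q` and causal linear output-feedback controllers
`u = U'y + q'`, where `η = y - CHu`. -/
theorem purified_output_feedback_equiv {T m p n : ℕ}
    (C : Matrix (Fin T × Fin p) (Fin n) ℝ)
    (H : Matrix (Fin n) (Fin T × Fin m) ℝ)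
    (hCH : IsStrictBlockLowerTri (C * H))
    (u : Fin T × Fin m → ℝ) (y η : Fin T × Fin p → ℝ)
    (hη : η = y - (C * H).mulVec u) :
    (∀ (U : Matrix (Fin T × Fin m) (Fin T × Fin p) ℝ) (q : Fin T × Fin m → ℝ),
      IsBlockLowerTri U → u = U.mulVec η + q →
        u = ((1 + U * C * H)⁻¹ * U).mulVec y + (1 + U * C * H)⁻¹.mulVec q) ∧
    (∀ (U' : Matrix (Fin T × Fin m) (Fin T × Fin p) ℝ) (q' : Fin T × Fin m → ℝ),
      IsBlockLowerTri U' → u = U'.mulVec y + q' →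
        u = ((1 - U' * C * H)⁻¹ * U').mulVec η + (1 - U' * C * H)⁻¹.mulVec q') := by
  constructor
  · intro U q hU hu
    set N := U * C * H with hNdef
    have hNs := strict_prod U C H hU hCH
    have hdet : IsUnit (1 + N).det := by
      rw [det_one_add_strict N hNs]; exact isUnit_one
    have h2 : (C * H).mulVec u = y - η := by rw [hη]; abel
    have key : (1 + N).mulVec u = U.mulVec y + q := by
      have h1 : N.mulVec u = U.mulVec ((C * H).mulVec u) := by
        rw [hNdef, Matrix.mul_assoc, Matrix.mulVec_mulVec]
      rw [Matrix.add_mulVec, Matrix.one_mulVec, h1, h2, Matrix.mulVec_sub]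
      rw [hu]
      abel
    calc u = (1 + N)⁻¹.mulVec ((1 + N).mulVec u) := by
            rw [Matrix.mulVec_mulVec, Matrix.nonsing_inv_mul _ hdet, Matrix.one_mulVec]
      _ = ((1 + N)⁻¹ * U).mulVec y + (1 + N)⁻¹.mulVec q := by
            rw [key, Matrix.mulVec_add, Matrix.mulVec_mulVec]
  · intro U' q' hU' hu
    set N := U' * C * H with hNdef
    have hNs := strict_prod U' C H hU' hCH
    have hdet : IsUnit (1 - N).det := by
      rw [sub_eq_add_neg,
        det_one_add_strict (-N) (fun i j hij => by
          rw [Matrix.neg_apply, hNdef, hNs i j hij, neg_zero])]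
      exact isUnit_one
    have h2 : (C * H).mulVec u = y - η := by rw [hη]; abel
    have key : (1 - N).mulVec u = U'.mulVec η + q' := by
      have h1 : N.mulVec u = U'.mulVec ((C * H).mulVec u) := by
        rw [hNdef, Matrix.mul_assoc, Matrix.mulVec_mulVec]
      rw [Matrix.sub_mulVec, Matrix.one_mulVec, h1, h2, Matrix.mulVec_sub]
      rw [hu]
      abel
    calc u = (1 - N)⁻¹.mulVec ((1 - N).mulVec u) := by
            rw [Matrix.mulVec_mulVec, Matrix.nonsing_inv_mul _ hdet, Matrix.one_mulVec]
      _ = ((1 - N)⁻¹ * U').mulVec η + (1 - N)⁻¹.mulVec q' := by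
            rw [key, Matrix.mulVec_add, Matrix.mulVec_mulVec]
end

section
/- Let Ẑ ∈ S_{++}^d, Γ ∈ S_+^d with Γ ≠ 0, and ρ > 0. For γ > λ_max(Γ), define h(γ) = ρ² - ⟨Ẑ, (I - γ(γI - Γ)^{-1})²⟩. Then h has a unique root γ* in the interval (λ_max(Γ), ∞). -/
open Matrix

/-- The largest eigenvalue of a Hermitian matrix. -/
noncomputable def lamMax {d : ℕ} (Γ : Matrix (Fin d) (Fin d) ℝ)
    (hΓ : Γ.IsHermitian) : ℝ :=
  ⨆ i, hΓ.eigenvalues i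

section Aux

variable {d : ℕ}

lemma trace_mul_diagonal'' (M : Matrix (Fin d) (Fin d) ℝ) (v : Fin d → ℝ) :
    (M * diagonal v).trace = ∑ i, M i i * v i := by
  simp [Matrix.trace, Matrix.diag, Matrix.mul_diagonal]

lemma diag_entry_eq_dot (M : Matrix (Fin d) (Fin d) ℝ) (i : Fin d) :
    M i i = dotProduct (star (Pi.single i 1 : Fin d → ℝ))
      (M *ᵥ (Pi.single i 1 : Fin d → ℝ)) := by
  simp [dotProduct, mulVec, Pi.single_apply, Finset.sum_ite_eq', mul_comm]

end Aux

set_option maxHeartbeats 1000000 in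
/-- For `Ẑ ≻ 0`, `Γ ⪰ 0` with `Γ ≠ 0` and `ρ > 0`, the function
`h(γ) = ρ² - ⟨Ẑ, (I - γ(γI - Γ)⁻¹)²⟩` has a unique root in the interval
`(λ_max(Γ), ∞)`. -/
theorem unique_root_dual_equation {d : ℕ}
    (Zh Γ : Matrix (Fin d) (Fin d) ℝ)
    (hZh : Zh.PosDef) (hΓ : Γ.PosSemidef) (hΓne : Γ ≠ 0)
    (ρ : ℝ) (hρ : 0 < ρ) :
    ∃! γ : ℝ, γ ∈ Set.Ioi (lamMax Γ hΓ.1) ∧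
      ρ ^ 2 - (Zhᵀ * ((1 : Matrix (Fin d) (Fin d) ℝ)
        - γ • (γ • (1 : Matrix (Fin d) (Fin d) ℝ) - Γ)⁻¹) ^ 2).trace = 0 := by
  classical
  haveI hd : Nonempty (Fin d) := by
    by_contra h
    rw [not_nonempty_iff] at h
    exact hΓne (by ext i j; exact (h.false i).elim)
  set U : Matrix (Fin d) (Fin d) ℝ := (hΓ.1.eigenvectorUnitary : Matrix (Fin d) (Fin d) ℝ)
    with hUdef
  set lam : Fin d → ℝ := hΓ.1.eigenvalues with hlamdef
  have hspec : Γ = U * diagonal lam * star U := by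
    have := hΓ.1.spectral_theorem
    simpa [RCLike.ofReal_real_eq_id] using this
  have hU1 : U * star U = 1 := mem_unitaryGroup_iff.mp (hΓ.1.eigenvectorUnitary).2
  have hU2 : star U * U = 1 := mem_unitaryGroup_iff'.mp (hΓ.1.eigenvectorUnitary).2
  set w : Fin d → ℝ := fun i => (star U * Zh * U) i i with hwdef
  -- positivity of the weights
  have hw : ∀ i, 0 < w i := by
    intro i
    have hx : U *ᵥ (Pi.single i 1 : Fin d → ℝ) ≠ 0 := by
      intro h
      have h2 : (star U * U) *ᵥ (Pi.single i 1 : Fin d → ℝ) = 0 := by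
        rw [← mulVec_mulVec, h, mulVec_zero]
      rw [hU2, one_mulVec] at h2
      have := congrFun h2 i
      simp [Pi.single_apply] at this
    have key : w i = dotProduct (star (U *ᵥ (Pi.single i 1 : Fin d → ℝ)))
        (Zh *ᵥ (U *ᵥ (Pi.single i 1 : Fin d → ℝ))) := by
      show (star U * Zh * U) i i = _
      rw [diag_entry_eq_dot (star U * Zh * U) i]
      rw [← mulVec_mulVec, ← mulVec_mulVec, dotProduct_mulVec _ (star U),
        star_mulVec, Matrix.star_eq_conjTranspose]
    rw [key]
    exact hZh.dotProduct_mulVec_pos hx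
  set L : ℝ := lamMax Γ hΓ.1 with hLdef
  have hLsup : L = ⨆ i, lam i := rfl
  have hlamle : ∀ i, lam i ≤ L := by
    intro i
    rw [hLsup]
    exact le_ciSup (Set.Finite.bddAbove (Set.finite_range lam)) i
  obtain ⟨i0, hi0⟩ : ∃ i0, lam i0 = L := by
    obtain ⟨i0, hi0⟩ := exists_eq_ciSup_of_finite (f := lam)
    exact ⟨i0, by rw [hLsup, hi0]⟩
  have hL0 : 0 < L := by
    have hnz : ∃ j, lam j ≠ 0 := by
      by_contra h
      push_neg at h
      apply hΓne
      rw [hspec, show lam = (fun _ => (0:ℝ)) from funext h]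
      simp
    obtain ⟨j, hj⟩ := hnz
    have : 0 < lam j := lt_of_le_of_ne (hΓ.eigenvalues_nonneg j) (Ne.symm hj)
    exact this.trans_le (hlamle j)
  -- conjugation lemma
  have hconj : ∀ a b : Fin d → ℝ,
      (U * diagonal a * star U) * (U * diagonal b * star U)
        = U * diagonal (fun i => a i * b i) * star U := by
    intro a b
    simp only [Matrix.mul_assoc]
    rw [← Matrix.mul_assoc (star U) U, hU2, one_mul,
      ← Matrix.mul_assoc (diagonal a) (diagonal b), diagonal_mul_diagonal]
  -- the scalar function
  set s : ℝ → ℝ := fun γ => ∑ i, w i * lam i ^ 2 * ((γ - lam i)⁻¹) ^ 2 with hsdef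
  -- trace identity
  have htr : ∀ γ ∈ Set.Ioi L,
      (Zhᵀ * ((1 : Matrix (Fin d) (Fin d) ℝ)
        - γ • (γ • (1 : Matrix (Fin d) (Fin d) ℝ) - Γ)⁻¹) ^ 2).trace = s γ := by
    intro γ hγ
    rw [Set.mem_Ioi] at hγ
    have hpos : ∀ i, 0 < γ - lam i := fun i => sub_pos.2 ((hlamle i).trans_lt hγ)
    have hZt : Zhᵀ = Zh := by
      have hsymm : ∀ i j, Zh j i = Zh i j := by
        intro i j
        conv_rhs => rw [← hZh.1]
        simp [conjTranspose_apply]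
      ext i j
      simp [transpose_apply, hsymm]
    have e1 : γ • (1 : Matrix (Fin d) (Fin d) ℝ)
        = U * (γ • (1 : Matrix (Fin d) (Fin d) ℝ)) * star U := by
      rw [Matrix.mul_smul, Matrix.smul_mul, mul_one, hU1]
    have hA : γ • (1 : Matrix (Fin d) (Fin d) ℝ) - Γ
        = U * diagonal (fun i => γ - lam i) * star U := by
      calc γ • (1 : Matrix (Fin d) (Fin d) ℝ) - Γ
          = U * (γ • (1 : Matrix (Fin d) (Fin d) ℝ)) * star U
            - U * diagonal lam * star U := by rw [← e1, ← hspec]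
        _ = U * ((γ • (1 : Matrix (Fin d) (Fin d) ℝ)) - diagonal lam) * star U := by
            rw [Matrix.mul_sub, Matrix.sub_mul]
        _ = U * diagonal (fun i => γ - lam i) * star U := by
            rw [Matrix.smul_one_eq_diagonal, Matrix.diagonal_sub]
    have hinv : (γ • (1 : Matrix (Fin d) (Fin d) ℝ) - Γ)⁻¹
        = U * diagonal (fun i => (γ - lam i)⁻¹) * star U := by
      apply inv_eq_right_inv
      rw [hA, hconj]
      have hone : (fun i => (γ - lam i) * (γ - lam i)⁻¹) = fun _ => (1:ℝ) :=
        funext fun i => mul_inv_cancel₀ (hpos i).ne'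
      rw [hone, Matrix.diagonal_one, mul_one, hU1]
    have hsmul : γ • (U * diagonal (fun i => (γ - lam i)⁻¹) * star U)
        = U * diagonal (fun i => γ * (γ - lam i)⁻¹) * star U := by
      rw [← Matrix.smul_mul, ← Matrix.mul_smul]
      congr 2
      rw [← Matrix.diagonal_smul]
      congr 1
    have hone : (1 : Matrix (Fin d) (Fin d) ℝ)
        = U * diagonal (fun _ => (1:ℝ)) * star U := by
      rw [Matrix.diagonal_one, mul_one, hU1]
    have hmat : (1 : Matrix (Fin d) (Fin d) ℝ)
        - γ • (γ • (1 : Matrix (Fin d) (Fin d) ℝ) - Γ)⁻¹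
        = U * diagonal (fun i => 1 - γ * (γ - lam i)⁻¹) * star U := by
      rw [hinv, hsmul]
      calc (1 : Matrix (Fin d) (Fin d) ℝ)
            - U * diagonal (fun i => γ * (γ - lam i)⁻¹) * star U
          = U * diagonal (fun _ => (1:ℝ)) * star U
            - U * diagonal (fun i => γ * (γ - lam i)⁻¹) * star U := by rw [← hone]
        _ = U * (diagonal (fun _ => (1:ℝ))
            - diagonal (fun i => γ * (γ - lam i)⁻¹)) * star U := by
            rw [Matrix.mul_sub, Matrix.sub_mul]
        _ = _ := by rw [Matrix.diagonal_sub]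
    have hsq : (U * diagonal (fun i => 1 - γ * (γ - lam i)⁻¹) * star U) ^ 2
        = U * diagonal (fun i => (1 - γ * (γ - lam i)⁻¹) ^ 2) * star U := by
      rw [sq, hconj]
      have e2 : (fun i => (1 - γ * (γ - lam i)⁻¹) * (1 - γ * (γ - lam i)⁻¹))
          = (fun i => (1 - γ * (γ - lam i)⁻¹) ^ 2) := by
        funext i; rw [sq]
      rw [e2]
    rw [hZt, hmat, hsq]
    -- compute trace via cyclicity
    have hcyc : (Zh * (U * diagonal (fun i => (1 - γ * (γ - lam i)⁻¹) ^ 2) * star U)).trace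
        = ((star U * Zh * U) * diagonal (fun i => (1 - γ * (γ - lam i)⁻¹) ^ 2)).trace := by
      rw [show Zh * (U * diagonal (fun i => (1 - γ * (γ - lam i)⁻¹) ^ 2) * star U)
          = (Zh * (U * diagonal (fun i => (1 - γ * (γ - lam i)⁻¹) ^ 2))) * star U from
        (Matrix.mul_assoc _ _ _).symm]
      rw [Matrix.trace_mul_comm]
      simp only [← Matrix.mul_assoc]
    rw [hcyc, trace_mul_diagonal'']
    simp only [hsdef]
    apply Finset.sum_congr rfl
    intro i _
    have hne : γ - lam i ≠ 0 := (hpos i).ne'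
    have hv : (1 - γ * (γ - lam i)⁻¹) ^ 2 = lam i ^ 2 * ((γ - lam i)⁻¹) ^ 2 := by
      field_simp
      ring
    rw [hv]
    simp only [hwdef]
    ring
  -- strict monotonicity of h = ρ² - s on Ioi L
  have hmono : StrictMonoOn (fun γ => ρ ^ 2 - s γ) (Set.Ioi L) := by
    intro x hx y hy hxy
    rw [Set.mem_Ioi] at hx hy
    have hsy : s y < s x := by
      rw [hsdef]
      apply Finset.sum_lt_sum
      · intro i _
        have h1 : 0 < x - lam i := sub_pos.2 ((hlamle i).trans_lt hx)
        have h2 : x - lam i ≤ y - lam i := by linarith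
        have h3 : (y - lam i)⁻¹ ≤ (x - lam i)⁻¹ := by
          apply inv_anti₀ h1 h2
        have h4 : ((y - lam i)⁻¹) ^ 2 ≤ ((x - lam i)⁻¹) ^ 2 :=
          pow_le_pow_left₀ (inv_nonneg.2 (by linarith : (0:ℝ) ≤ y - lam i)) h3 2
        apply mul_le_mul_of_nonneg_left h4
        exact mul_nonneg (hw i).le (sq_nonneg _)
      · refine ⟨i0, Finset.mem_univ _, ?_⟩
        have h1 : 0 < x - lam i0 := sub_pos.2 ((hlamle i0).trans_lt hx)
        have h3 : (y - lam i0)⁻¹ < (x - lam i0)⁻¹ := by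
          apply inv_strictAnti₀ h1 (by linarith)
        have h4 : ((y - lam i0)⁻¹) ^ 2 < ((x - lam i0)⁻¹) ^ 2 :=
          pow_lt_pow_left₀ h3 (inv_nonneg.2 (by linarith : (0:ℝ) ≤ y - lam i0)) (by norm_num)
        apply mul_lt_mul_of_pos_left h4
        rw [hi0]
        exact mul_pos (hw i0) (by positivity)
    dsimp only
    linarith
  -- continuity
  have hcont : ContinuousOn (fun γ => ρ ^ 2 - s γ) (Set.Ioi L) := by
    apply continuousOn_const.sub
    apply continuousOn_finset_sum
    intro i _
    apply continuousOn_const.mul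
    apply ContinuousOn.pow
    apply ContinuousOn.inv₀
    · exact (continuousOn_id.sub continuousOn_const)
    · intro x hx
      rw [Set.mem_Ioi] at hx
      exact (sub_pos.2 ((hlamle i).trans_lt hx)).ne'
  -- choose the endpoints
  set C : ℝ := ∑ i, w i * lam i ^ 2 with hCdef
  have hC : 0 ≤ C := Finset.sum_nonneg fun i _ => mul_nonneg (hw i).le (sq_nonneg _)
  set b : ℝ := L + Real.sqrt ((C + 1) / ρ ^ 2) with hbdef
  have hbL : L < b := by
    have : 0 < Real.sqrt ((C + 1) / ρ ^ 2) := Real.sqrt_pos.2 (div_pos (by linarith) (by positivity))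
    rw [hbdef]
    linarith
  have hb2 : s b < ρ ^ 2 := by
    have hbsq : (b - L) ^ 2 = (C + 1) / ρ ^ 2 := by
      rw [hbdef, add_sub_cancel_left, Real.sq_sqrt (le_of_lt (div_pos (by linarith) (by positivity)))]
    have hbLpos : 0 < b - L := by linarith
    have hstep : s b ≤ C * ((b - L)⁻¹) ^ 2 := by
      rw [hsdef, hCdef, Finset.sum_mul]
      apply Finset.sum_le_sum
      intro i _
      have h1 : 0 < b - L := hbLpos
      have h2 : b - L ≤ b - lam i := by have := hlamle i; linarith
      have h3 : (b - lam i)⁻¹ ≤ (b - L)⁻¹ := inv_anti₀ h1 h2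
      have h4 : ((b - lam i)⁻¹) ^ 2 ≤ ((b - L)⁻¹) ^ 2 :=
        pow_le_pow_left₀ (inv_nonneg.2 (le_trans hbLpos.le h2)) h3 2
      exact mul_le_mul_of_nonneg_left h4 (mul_nonneg (hw i).le (sq_nonneg _))
    have hfin : C * ((b - L)⁻¹) ^ 2 < ρ ^ 2 := by
      rw [inv_pow, hbsq]
      have h1 : (0:ℝ) < C + 1 := by linarith
      calc C * ((C + 1) / ρ ^ 2)⁻¹ = C * (ρ ^ 2 / (C + 1)) := by rw [inv_div]
        _ = C / (C + 1) * ρ ^ 2 := by ring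
        _ < 1 * ρ ^ 2 := by
            apply mul_lt_mul_of_pos_right _ (by positivity)
            rw [div_lt_one h1]
            linarith
        _ = ρ ^ 2 := one_mul _
    linarith
  set a : ℝ := L + Real.sqrt (w i0 * L ^ 2 / (ρ ^ 2 + 1)) with hadef
  have haL : L < a := by
    have : 0 < Real.sqrt (w i0 * L ^ 2 / (ρ ^ 2 + 1)) :=
      Real.sqrt_pos.2 (by have := hw i0; positivity)
    rw [hadef]
    linarith
  have ha2 : ρ ^ 2 < s a := by
    have hasq : (a - L) ^ 2 = w i0 * L ^ 2 / (ρ ^ 2 + 1) := by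
      rw [hadef, add_sub_cancel_left, Real.sq_sqrt (by have := hw i0; positivity)]
    have haLpos : 0 < a - L := by linarith
    have hterm : w i0 * lam i0 ^ 2 * ((a - lam i0)⁻¹) ^ 2 = ρ ^ 2 + 1 := by
      rw [hi0, inv_pow, hasq]
      have hw0 : w i0 ≠ 0 := (hw i0).ne'
      have hL0' : L ≠ 0 := hL0.ne'
      have hρ1 : (ρ:ℝ) ^ 2 + 1 ≠ 0 := by positivity
      field_simp
    have hstep : w i0 * lam i0 ^ 2 * ((a - lam i0)⁻¹) ^ 2 ≤ s a := by
      rw [hsdef]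
      apply Finset.single_le_sum (f := fun i => w i * lam i ^ 2 * ((a - lam i)⁻¹) ^ 2)
        (fun i _ => mul_nonneg (mul_nonneg (hw i).le (sq_nonneg _)) (sq_nonneg _))
        (Finset.mem_univ i0)
    rw [hterm] at hstep
    linarith
  -- a < b
  have hab : a < b := by
    rcases lt_trichotomy a b with h | h | h
    · exact h
    · exfalso; rw [h] at ha2; linarith
    · exfalso
      have := hmono (Set.mem_Ioi.2 hbL) (Set.mem_Ioi.2 haL) h
      simp only at this
      linarith
  -- existence via IVT
  have hsub : Set.Icc a b ⊆ Set.Ioi L := fun x hx => Set.mem_Ioi.2 (haL.trans_le hx.1)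
  have hIVT := intermediate_value_Icc hab.le (hcont.mono hsub)
  have h0mem : (0:ℝ) ∈ Set.Icc (ρ ^ 2 - s a) (ρ ^ 2 - s b) :=
    ⟨by linarith, by linarith⟩
  obtain ⟨c, hc, hc0⟩ := hIVT h0mem
  have hcIoi : c ∈ Set.Ioi L := hsub hc
  refine ⟨c, ⟨hcIoi, ?_⟩, ?_⟩
  · rw [htr c hcIoi]
    exact hc0
  · rintro y ⟨hy1, hy2⟩
    rw [htr y hy1] at hy2
    have hc0' : ρ ^ 2 - s c = 0 := hc0
    exact hmono.injOn hy1 hcIoi (by rw [hy2, hc0'])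
end
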